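/- arXiv:2111.13524 — 2 statements merged into one kernel-verified Lean document; each statement's English description precedes it below -/
import Mathlib

section
/- Let Σ be a finite alphabet, a ∈ Σ, and n > 0. Define L = {w | |w|_a ≡ n − 1 (mod n)}. Then L is a commutative group language with sc(L) = n, its upward closure equals ↑L = {w | |w|_a ≥ n − 1}, and sc(↑L) = n. -/
open List

def IsCommutativeLang {α : Type} (L : Language α) : Prop :=
  ∀ u v : List α, u ~ v → (u ∈ L ↔ v ∈ L)

def UpClosure {α : Type} (L : Language α) : Language α :=
  {v | ∃ u ∈ L, u <+ v}

def DownClosure {α : Type} (L : Language α) : Language α :=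
  {u | ∃ v ∈ L, u <+ v}

def UpInterior {α : Type} (L : Language α) : Language α :=
  {w | ∃ U : Language α, (∀ x ∈ U, x ∈ L) ∧ UpClosure U = U ∧ w ∈ U}

def DownInterior {α : Type} (L : Language α) : Language α :=
  {w | ∃ U : Language α, (∀ x ∈ U, x ∈ L) ∧ DownClosure U = U ∧ w ∈ U}

def RecognizedBy {α : Type} (L : Language α) (n : ℕ) : Prop :=
  ∃ (σ : Type) (_ : Fintype σ) (M : DFA α σ), Fintype.card σ = n ∧ M.accepts = L

noncomputable def sc {α : Type} (L : Language α) : ℕ :=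
  sInf {n | RecognizedBy L n}

def Nerode {α : Type} (L : Language α) (u v : List α) : Prop :=
  ∀ x : List α, u ++ x ∈ L ↔ v ++ x ∈ L

inductive IsShuffle {α : Type} : List α → List α → List α → Prop
  | nil : IsShuffle [] [] []
  | left (x : α) {u v w : List α} : IsShuffle u v w → IsShuffle (x :: u) v (x :: w)
  | right (y : α) {u v w : List α} : IsShuffle u v w → IsShuffle u (y :: v) (y :: w)

def Shuffle {α : Type} (U V : Language α) : Language α :=
  {w | ∃ u ∈ U, ∃ v ∈ V, IsShuffle u v w}

def IsPermDFA {α σ : Type} (M : DFA α σ) : Prop :=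
  ∀ a : α, Function.Bijective fun q => M.step q a

def IsGroupLang {α : Type} (L : Language α) : Prop :=
  ∃ (σ : Type) (_ : Fintype σ) (M : DFA α σ), IsPermDFA M ∧ M.accepts = L

def wpow {α : Type} (w : List α) (n : ℕ) : List α :=
  (List.replicate n w).flatten

def IsAperiodicDFA {α σ : Type} (M : DFA α σ) : Prop :=
  ∀ (q : σ) (w : List α) (n : ℕ), 1 ≤ n → M.evalFrom q (wpow w n) = q → M.evalFrom q w = q

def IsAperiodicLang {α : Type} (L : Language α) : Prop :=
  ∃ (σ : Type) (_ : Fintype σ) (M : DFA α σ), IsAperiodicDFA M ∧ M.accepts = L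

def ShuffleList {α : Type} : List (Language α) → Language α
  | [] => {([] : List α)}
  | L :: Ls => Shuffle L (ShuffleList Ls)

def UnaryGroupLang {α : Type} (a : α) (U : Language α) : Prop :=
  (∀ w ∈ U, ∀ x ∈ w, x = a) ∧
  ∃ (σ : Type) (_ : Fintype σ) (M : DFA Unit σ), IsPermDFA M ∧
    ∀ n : ℕ, (List.replicate n a ∈ U ↔ List.replicate n () ∈ M.accepts)

def UnaryAperiodicLang {α : Type} (a : α) (U : Language α) : Prop :=
  (∀ w ∈ U, ∀ x ∈ w, x = a) ∧
  ∃ (σ : Type) (_ : Fintype σ) (M : DFA Unit σ), IsAperiodicDFA M ∧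
    ∀ n : ℕ, (List.replicate n a ∈ U ↔ List.replicate n () ∈ M.accepts)

section AuxStatement13

variable {α : Type} [DecidableEq α]

open Fin.NatCast Fin.CommRing

/-- Mod-counting DFA: counts occurrences of `a` modulo `m+1`. -/
def dfaMod (a : α) (m : ℕ) : DFA α (Fin (m + 1)) where
  step q c := if c = a then q + 1 else q
  start := 0
  accept := {Fin.last m}

lemma dfaMod_evalFrom (a : α) (m : ℕ) (q : Fin (m + 1)) (w : List α) :
    (dfaMod a m).evalFrom q w = q + (w.count a : Fin (m + 1)) := by
  induction w generalizing q with
  | nil => simp [DFA.evalFrom]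
  | cons c w ih =>
    show (dfaMod a m).evalFrom ((dfaMod a m).step q c) w = _
    rw [ih]
    by_cases h : c = a
    · subst h
      simp only [dfaMod, if_pos rfl, List.count_cons_self]
      push_cast
      ring
    · simp only [dfaMod, if_neg h, List.count_cons_of_ne h]

lemma dfaMod_accepts (a : α) (m : ℕ) :
    (dfaMod a m).accepts = {w : List α | w.count a % (m + 1) = m} := by
  ext w
  rw [DFA.mem_accepts]
  have he : (dfaMod a m).eval w = (w.count a : Fin (m + 1)) := by
    show (dfaMod a m).evalFrom 0 w = _
    simpa using dfaMod_evalFrom a m 0 w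
  rw [he]
  constructor
  · intro h
    have h2 : (w.count a : Fin (m + 1)) = Fin.last m := h
    have h3 : ((w.count a : Fin (m + 1)) : ℕ) = m := by rw [h2, Fin.val_last]
    rw [Fin.val_natCast] at h3
    exact h3
  · intro h
    have h1 : w.count a % (m + 1) = m := h
    show (w.count a : Fin (m + 1)) = Fin.last m
    apply Fin.ext
    rw [Fin.val_natCast, Fin.val_last]
    exact h1

lemma dfaMod_perm (a : α) (m : ℕ) : IsPermDFA (dfaMod a m) := by
  intro c
  by_cases h : c = a
  · simpa [dfaMod, h] using (Equiv.addRight (1 : Fin (m + 1))).bijective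
  · simpa [dfaMod, h] using Function.bijective_id

/-- Saturating counting DFA: counts occurrences of `a` up to `m`. -/
def dfaMin (a : α) (m : ℕ) : DFA α (Fin (m + 1)) where
  step q c := if c = a then ⟨min (q.1 + 1) m, by omega⟩ else q
  start := 0
  accept := {Fin.last m}

lemma dfaMin_evalFrom (a : α) (m : ℕ) (q : Fin (m + 1)) (w : List α) :
    (dfaMin a m).evalFrom q w = ⟨min (q.1 + w.count a) m, by omega⟩ := by
  induction w generalizing q with
  | nil =>
    apply Fin.ext
    have := q.isLt
    simp [DFA.evalFrom]
    omega
  | cons c w ih =>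
    show (dfaMin a m).evalFrom ((dfaMin a m).step q c) w = _
    rw [ih]
    by_cases h : c = a
    · subst h
      simp only [dfaMin, if_pos rfl, List.count_cons_self]
      apply Fin.ext
      simp
      omega
    · simp only [dfaMin, if_neg h, List.count_cons_of_ne h]

lemma dfaMin_accepts (a : α) (m : ℕ) :
    (dfaMin a m).accepts = {w : List α | m ≤ w.count a} := by
  ext w
  rw [DFA.mem_accepts]
  have he : (dfaMin a m).eval w = ⟨min (0 + w.count a) m, by omega⟩ := by
    show (dfaMin a m).evalFrom 0 w = _
    exact dfaMin_evalFrom a m 0 w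
  rw [he]
  constructor
  · intro h
    have h2 : (⟨min (0 + w.count a) m, by omega⟩ : Fin (m + 1)) = Fin.last m := h
    have h3 : min (0 + w.count a) m = m := congrArg Fin.val h2
    show m ≤ w.count a
    omega
  · intro h
    have h1 : m ≤ w.count a := h
    show (⟨min (0 + w.count a) m, by omega⟩ : Fin (m + 1)) = Fin.last m
    apply Fin.ext
    show min (0 + w.count a) m = m
    omega

lemma card_lower_bound {α σ : Type} [Fintype σ] (L : Language α) (M : DFA α σ)
    (hM : M.accepts = L) (k : ℕ) (f : Fin k → List α)
    (hf : ∀ i j : Fin k, i ≠ j → ∃ x, ¬(f i ++ x ∈ L ↔ f j ++ x ∈ L)) :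
    k ≤ Fintype.card σ := by
  have inj : Function.Injective fun i => M.eval (f i) := by
    intro i j hij
    by_contra hne
    obtain ⟨x, hx⟩ := hf i j hne
    apply hx
    have hij' : M.evalFrom M.start (f i) = M.evalFrom M.start (f j) := hij
    rw [← hM, DFA.mem_accepts, DFA.mem_accepts]
    show M.evalFrom M.start (f i ++ x) ∈ _ ↔ M.evalFrom M.start (f j ++ x) ∈ _
    rw [DFA.evalFrom_of_append, DFA.evalFrom_of_append, hij']
  simpa using Fintype.card_le_of_injective _ inj

end AuxStatement13

/-- for `n > 0`, the language `L = {w | |w|_a ≡ n - 1 (mod n)}` is a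
commutative group language with `sc L = n`, its upward closure is
`{w | |w|_a ≥ n - 1}`, of state complexity `n`. -/
theorem upClosure_group_lower_bound {α : Type} [Fintype α] [DecidableEq α]
    (a : α) (n : ℕ) (hn : 0 < n) (L : Language α)
    (hL : L = {w : List α | w.count a % n = n - 1}) :
    IsCommutativeLang L ∧ IsGroupLang L ∧ sc L = n ∧
    UpClosure L = {w : List α | n - 1 ≤ w.count a} ∧
    sc (UpClosure L) = n := by
  obtain ⟨m, rfl⟩ := Nat.exists_eq_succ_of_ne_zero hn.ne'
  simp only [Nat.succ_sub_one, Nat.add_sub_cancel] at hL ⊢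
  subst hL
  have hup : UpClosure ({w : List α | w.count a % (m + 1) = m} : Language α)
      = {w : List α | m ≤ w.count a} := by
    ext w
    constructor
    · rintro ⟨u, hu, hsub⟩
      have h1 : u.count a % (m + 1) = m := hu
      have h2 : u.count a ≤ w.count a := hsub.count_le a
      have h3 : u.count a % (m + 1) ≤ u.count a := Nat.mod_le _ _
      show m ≤ w.count a
      omega
    · intro hw
      refine ⟨List.replicate m a, ?_, List.replicate_sublist_iff.mpr hw⟩
      show (List.replicate m a).count a % (m + 1) = m
      rw [List.count_replicate_self, Nat.mod_eq_of_lt (Nat.lt_succ_self m)]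
  refine ⟨?_, ?_, ?_, hup, ?_⟩
  · intro u v huv
    show u.count a % (m + 1) = m ↔ v.count a % (m + 1) = m
    rw [huv.count_eq a]
  · exact ⟨Fin (m + 1), inferInstance, dfaMod a m, dfaMod_perm a m, dfaMod_accepts a m⟩
  · have hmem : RecognizedBy ({w : List α | w.count a % (m + 1) = m} : Language α) (m + 1) :=
      ⟨Fin (m + 1), inferInstance, dfaMod a m, by simp, dfaMod_accepts a m⟩
    unfold sc
    apply _root_.le_antisymm
    · exact Nat.sInf_le hmem
    · refine le_csInf ⟨m + 1, hmem⟩ ?_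
      intro b hb
      obtain ⟨σ, inst, M, hcard, hacc⟩ : RecognizedBy _ b := hb
      rw [← hcard]
      apply card_lower_bound _ M hacc (m + 1) (fun i => List.replicate i.1 a)
      intro i j hne
      refine ⟨List.replicate (m - i.1) a, ?_⟩
      have hi := i.isLt
      have hj := j.isLt
      show ¬((List.replicate i.1 a ++ List.replicate (m - i.1) a).count a % (m + 1) = m ↔
        (List.replicate j.1 a ++ List.replicate (m - i.1) a).count a % (m + 1) = m)
      simp only [List.count_append, List.count_replicate_self]
      intro hiff
      have h1 : (i.1 + (m - i.1)) % (m + 1) = m := by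
        rw [Nat.mod_eq_of_lt (by omega)]; omega
      have h2 := hiff.mp h1
      apply hne
      apply Fin.ext
      rcases Nat.lt_or_ge (j.1 + (m - i.1)) (m + 1) with h | h
      · rw [Nat.mod_eq_of_lt h] at h2; omega
      · rw [Nat.mod_eq_sub_mod h, Nat.mod_eq_of_lt (by omega)] at h2; omega
  · rw [hup]
    have hmem : RecognizedBy ({w : List α | m ≤ w.count a} : Language α) (m + 1) :=
      ⟨Fin (m + 1), inferInstance, dfaMin a m, by simp, dfaMin_accepts a m⟩
    unfold sc
    apply _root_.le_antisymm
    · exact Nat.sInf_le hmem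
    · refine le_csInf ⟨m + 1, hmem⟩ ?_
      intro b hb
      obtain ⟨σ, inst, M, hcard, hacc⟩ : RecognizedBy _ b := hb
      rw [← hcard]
      apply card_lower_bound _ M hacc (m + 1) (fun i => List.replicate i.1 a)
      intro i j hne
      have hi := i.isLt
      have hj := j.isLt
      have hne' : i.1 ≠ j.1 := fun h => hne (Fin.ext h)
      rcases Nat.lt_or_ge i.1 j.1 with h | h
      · refine ⟨List.replicate (m - j.1) a, ?_⟩
        show ¬(m ≤ (List.replicate i.1 a ++ List.replicate (m - j.1) a).count a ↔
          m ≤ (List.replicate j.1 a ++ List.replicate (m - j.1) a).count a)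
        simp only [List.count_append, List.count_replicate_self]
        omega
      · refine ⟨List.replicate (m - i.1) a, ?_⟩
        show ¬(m ≤ (List.replicate i.1 a ++ List.replicate (m - i.1) a).count a ↔
          m ≤ (List.replicate j.1 a ++ List.replicate (m - i.1) a).count a)
        simp only [List.count_append, List.count_replicate_self]
        omega
end

section
/- Let Σ be a finite alphabet with |Σ| = k ≥ 1 and let N ≥ 1. Consider the finite commutative language L = {a^N | a ∈ Σ}. Then L is recognized by a DFA with kN + 2 states, the upward closure satisfies ↑L = {w | ∃ a ∈ Σ, |w|_a ≥ N}, and sc(↑L) = N^k + 1. -/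
open List

section Aux
variable {α : Type} [Fintype α] [DecidableEq α]

def M1 (N : ℕ) : DFA α (Option (Option (α × Fin N))) where
  step q b :=
    match q with
    | none => none
    | some none => if h : 0 < N then some (some (b, ⟨0, h⟩)) else none
    | some (some (a, i)) =>
        if h : b = a ∧ (i : ℕ) + 1 < N then some (some (a, ⟨(i : ℕ) + 1, h.2⟩)) else none
  start := some none
  accept := {q | ∃ (a : α) (i : Fin N), q = some (some (a, i)) ∧ (i : ℕ) + 1 = N}

def code1 (N : ℕ) : List α → Option (Option (α × Fin N))
  | [] => some none
  | a :: t => if h : (∀ x ∈ t, x = a) ∧ t.length < N then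
      some (some (a, ⟨t.length, h.2⟩)) else none

lemma code1_cons (N : ℕ) (a : α) (t : List α) :
    code1 N (a :: t) = if h : (∀ x ∈ t, x = a) ∧ t.length < N then
      some (some (a, ⟨t.length, h.2⟩)) else none := rfl

lemma eval1 (N : ℕ) (w : List α) : (M1 (α := α) N).eval w = code1 N w := by
  induction w using List.reverseRecOn with
  | nil => rfl
  | append_singleton w b ih =>
    have hstep : (M1 (α := α) N).eval (w ++ [b]) = (M1 (α := α) N).step ((M1 (α := α) N).eval w) b := by
      simp [DFA.eval, DFA.evalFrom_of_append, DFA.evalFrom]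
    rw [hstep, ih]
    rcases w with _ | ⟨a, t⟩
    · by_cases h : 0 < N
      · simp [M1, code1, h]
      · simp [M1, code1, h]
    · have hcons : (a :: t) ++ [b] = a :: (t ++ [b]) := rfl
      rw [hcons, code1_cons, code1_cons]
      by_cases h1 : (∀ x ∈ t, x = a) ∧ t.length < N
      · rw [dif_pos h1]
        by_cases h2 : b = a ∧ t.length + 1 < N
        · have hc : (∀ x ∈ t ++ [b], x = a) ∧ (t ++ [b]).length < N := by
            constructor
            · intro x hx
              rcases List.mem_append.mp hx with hx | hx
              · exact h1.1 x hx
              · simp at hx; subst hx; exact h2.1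
            · simpa using h2.2
          rw [dif_pos hc]
          have : (M1 (α := α) N).step (some (some (a, ⟨t.length, h1.2⟩))) b
              = some (some (a, ⟨t.length + 1, h2.2⟩)) := by
            simp only [M1]; rw [dif_pos]; exact h2
          rw [this]
          simp
        · rw [dif_neg (by rintro ⟨hall, hlen⟩; exact h2 ⟨hall b (by simp), by simpa using hlen⟩)]
          simp only [M1]; rw [dif_neg]; exact h2
      · rw [dif_neg h1, dif_neg]
        · rfl
        · rintro ⟨hall, hlen⟩
          refine h1 ⟨fun x hx => hall x (by simp [hx]), ?_⟩
          simp at hlen; omega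

lemma accepts1 (N : ℕ) (hN : 1 ≤ N) :
    (M1 (α := α) N).accepts = {w : List α | ∃ a : α, w = List.replicate N a} := by
  ext w
  rw [DFA.mem_accepts]
  show (M1 (α := α) N).eval w ∈ _ ↔ _
  rw [eval1]
  constructor
  · rintro ⟨a, i, heq, hiN⟩
    rcases w with _ | ⟨c, t⟩
    · simp [code1] at heq
    · rw [code1_cons] at heq
      by_cases h1 : (∀ x ∈ t, x = c) ∧ t.length < N
      · rw [dif_pos h1] at heq
        simp only [Option.some.injEq, Prod.mk.injEq] at heq
        obtain ⟨rfl, hfin⟩ := heq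
        have hlen : t.length = (i : ℕ) := by
          have := congrArg Fin.val hfin; simpa using this
        refine ⟨c, List.eq_replicate_iff.mpr ⟨by simp [hlen]; omega, ?_⟩⟩
        intro x hx
        rcases List.mem_cons.mp hx with rfl | hx
        · rfl
        · exact h1.1 x hx
      · rw [dif_neg h1] at heq; exact absurd heq (by simp)
  · rintro ⟨a, rfl⟩
    obtain ⟨m, rfl⟩ : ∃ m, N = m + 1 := ⟨N - 1, by omega⟩
    rw [List.replicate_succ, code1_cons]
    have hc : (∀ x ∈ List.replicate m a, x = a) ∧ (List.replicate m a).length < m + 1 := by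
      exact ⟨fun x hx => List.eq_of_mem_replicate hx, by simp⟩
    rw [dif_pos hc]
    exact ⟨a, ⟨m, by simpa using hc.2⟩, by simp, by simp⟩

lemma card1 (N k : ℕ) (hk : Fintype.card α = k) :
    Fintype.card (Option (Option (α × Fin N))) = k * N + 2 := by
  simp [Fintype.card_option, Fintype.card_prod, hk]

end Aux


section Aux2
variable {α : Type} [Fintype α] [DecidableEq α]

lemma up_eq (N : ℕ) (L : Language α)
    (hL : L = {w : List α | ∃ a : α, w = List.replicate N a}) :
    {v | ∃ u ∈ L, u <+ v} = {w : List α | ∃ a : α, N ≤ w.count a} := by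
  ext w
  constructor
  · rintro ⟨u, hu, hsub⟩
    rw [hL] at hu
    obtain ⟨a, rfl⟩ := hu
    refine ⟨a, ?_⟩
    have := hsub.count_le a
    simpa [List.count_replicate] using this
  · rintro ⟨a, ha⟩
    exact ⟨List.replicate N a, hL ▸ ⟨a, rfl⟩, List.replicate_sublist_iff.mpr ha⟩

def M2 (N : ℕ) (hN : 0 < N) : DFA α (Option (α → Fin N)) where
  step q b :=
    match q with
    | none => none
    | some f => if h : (f b : ℕ) + 1 < N then some (Function.update f b ⟨(f b : ℕ) + 1, h⟩) else none
  start := some (fun _ => ⟨0, hN⟩)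
  accept := {none}

def code2 (N : ℕ) (w : List α) : Option (α → Fin N) :=
  if h : ∃ a : α, N ≤ w.count a then none
  else some (fun a => ⟨w.count a, lt_of_not_ge fun hc => h ⟨a, hc⟩⟩)

lemma eval2 (N : ℕ) (hN : 0 < N) (w : List α) :
    (M2 (α := α) N hN).eval w = code2 N w := by
  induction w using List.reverseRecOn with
  | nil =>
    show some _ = code2 N []
    rw [code2, dif_neg (by simp; omega)]
    simp
  | append_singleton w b ih =>
    have hstep : (M2 (α := α) N hN).eval (w ++ [b])
        = (M2 (α := α) N hN).step ((M2 (α := α) N hN).eval w) b := by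
      simp [DFA.eval, DFA.evalFrom_of_append, DFA.evalFrom]
    rw [hstep, ih]
    have hcnt : ∀ a : α, (w ++ [b]).count a = w.count a + if b = a then 1 else 0 := by
      intro a; simp [List.count_append, List.count_cons]
    by_cases h : ∃ a : α, N ≤ w.count a
    · have h' : ∃ a : α, N ≤ (w ++ [b]).count a := by
        obtain ⟨a, ha⟩ := h
        exact ⟨a, by rw [hcnt]; omega⟩
      rw [code2, dif_pos h, code2, dif_pos h']
      rfl
    · rw [code2, dif_neg h]
      have hlt : ∀ a : α, w.count a < N := fun a => lt_of_not_ge fun hc => h ⟨a, hc⟩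
      by_cases h2 : w.count b + 1 < N
      · have : (M2 (α := α) N hN).step (some fun a => ⟨w.count a, hlt a⟩) b
            = some (Function.update (fun a => ⟨w.count a, hlt a⟩) b ⟨w.count b + 1, h2⟩) := by
          simp only [M2]
          exact dif_pos h2
        have hno : ¬∃ a : α, N ≤ (w ++ [b]).count a := by
          rintro ⟨a, ha⟩
          rw [hcnt] at ha
          by_cases hab : b = a
          · subst hab; simp at ha; omega
          · rw [if_neg hab] at ha; exact absurd ha (by have := hlt a; omega)
        rw [this, code2, dif_neg hno]
        · congr 1
          funext a
          rw [Function.update_apply]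
          by_cases hab : a = b
          · subst hab
            rw [if_pos rfl]
            ext
            show count a w + 1 = count a (w ++ [a])
            rw [hcnt]; simp
          · rw [if_neg hab]
            ext
            show count a w = count a (w ++ [b])
            rw [hcnt]; simp [Ne.symm hab]
      · have : (M2 (α := α) N hN).step (some fun a => ⟨w.count a, hlt a⟩) b = none := by
          simp only [M2]; rw [dif_neg]; exact h2
        rw [this, code2, dif_pos (show ∃ a : α, N ≤ (w ++ [b]).count a from
          ⟨b, by rw [hcnt]; simp; omega⟩)]

lemma accepts2 (N : ℕ) (hN : 0 < N) :
    (M2 (α := α) N hN).accepts = {w : List α | ∃ a : α, N ≤ w.count a} := by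
  ext w
  rw [DFA.mem_accepts]
  show (M2 (α := α) N hN).eval w ∈ ({none} : Set _) ↔ _
  rw [eval2]
  rw [code2]
  by_cases h : ∃ a : α, N ≤ w.count a
  · rw [dif_pos h]; exact iff_of_true rfl h
  · rw [dif_neg h]
    exact iff_of_false (by simp) h

end Aux2


section Aux3
variable {α : Type} [Fintype α] [DecidableEq α]

noncomputable def wrd (f : α → ℕ) : List α :=
  (Finset.univ : Finset α).toList.flatMap fun a => List.replicate (f a) a

lemma count_flatMap_replicate (f : α → ℕ) (a : α) (l : List α) :
    List.count a (l.flatMap fun x => List.replicate (f x) x) = (List.count a l) * f a := by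
  induction l with
  | nil => simp
  | cons x t ih =>
    rw [List.flatMap_cons, List.count_append, ih, List.count_replicate, List.count_cons]
    by_cases hxa : x = a
    · subst hxa; simp [Nat.add_mul]; ring
    · simp [hxa]

lemma count_wrd (f : α → ℕ) (a : α) : List.count a (wrd f) = f a := by
  rw [wrd, count_flatMap_replicate,
    List.count_eq_one_of_mem (Finset.nodup_toList _) (by simp), one_mul]

lemma lower (N k : ℕ) (hN : 0 < N) (hk : Fintype.card α = k) (hk1 : 1 ≤ k)
    (σ : Type) [Fintype σ] (M : DFA α σ)
    (hacc : M.accepts = {w : List α | ∃ a : α, N ≤ w.count a}) :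
    N ^ k + 1 ≤ Fintype.card σ := by
  have hne : Nonempty α := Fintype.card_pos_iff.mp (by omega)
  obtain ⟨a₀⟩ := hne
  have key : ∀ u v : List α, M.eval u = M.eval v →
      ∀ z : List α, ((u ++ z) ∈ M.accepts ↔ (v ++ z) ∈ M.accepts) := by
    intro u v h z
    rw [DFA.mem_accepts, DFA.mem_accepts]
    show M.evalFrom M.start (u ++ z) ∈ _ ↔ M.evalFrom M.start (v ++ z) ∈ _
    rw [DFA.evalFrom_of_append, DFA.evalFrom_of_append]
    show M.evalFrom (M.eval u) z ∈ _ ↔ M.evalFrom (M.eval v) z ∈ _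
    rw [h]
  have hmem : ∀ w : List α, w ∈ M.accepts ↔ ∃ a : α, N ≤ w.count a := by
    intro w; rw [hacc]; rfl
  have hwrdnot : ∀ f : α → Fin N, wrd (fun a => (f a : ℕ)) ∉ M.accepts := by
    intro f hmem'
    obtain ⟨a, ha⟩ := (hmem _).mp hmem'
    rw [count_wrd] at ha
    exact absurd ha (by have := (f a).2; omega)
  -- two different Fin-tuples are distinguishable
  have hdist : ∀ f g : α → Fin N, (∃ a, (f a : ℕ) < (g a : ℕ)) →
      M.eval (wrd fun a => (f a : ℕ)) = M.eval (wrd fun a => (g a : ℕ)) → False := by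
    rintro f g ⟨a, hfg⟩ heq
    have hgN : (g a : ℕ) ≤ N := le_of_lt (g a).2
    set z := List.replicate (N - (g a : ℕ)) a with hz
    have hgz : (wrd fun b => (g b : ℕ)) ++ z ∈ M.accepts := by
      rw [hmem]
      refine ⟨a, ?_⟩
      rw [List.count_append, count_wrd, List.count_replicate]
      simp only [beq_self_eq_true, if_true]
      omega
    have hfz : (wrd fun b => (f b : ℕ)) ++ z ∉ M.accepts := by
      rw [hmem]
      rintro ⟨b, hb⟩
      rw [List.count_append, count_wrd, List.count_replicate] at hb
      by_cases hab : a = b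
      · subst hab
        simp only [beq_self_eq_true, if_true] at hb
        omega
      · simp only [beq_iff_eq, hab, if_false] at hb
        exact absurd hb (by have := (f b).2; omega)
    exact hfz ((key _ _ heq z).mpr hgz)
  let e : Option (α → Fin N) → σ := fun q =>
    match q with
    | none => M.eval (List.replicate N a₀)
    | some f => M.eval (wrd fun a => (f a : ℕ))
  have hinj : Function.Injective e := by
    rintro (_ | f) (_ | g) hxy
    · rfl
    · exfalso
      have := key _ _ hxy.symm []
      rw [List.append_nil, List.append_nil] at this
      refine hwrdnot g (this.mpr ?_)
      rw [hmem]
      exact ⟨a₀, by simp [List.count_replicate]⟩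
    · exfalso
      have := key _ _ hxy []
      rw [List.append_nil, List.append_nil] at this
      refine hwrdnot f (this.mpr ?_)
      rw [hmem]
      exact ⟨a₀, by simp [List.count_replicate]⟩
    · by_cases hfg : f = g
      · rw [hfg]
      · exfalso
        have : ∃ a, (f a : ℕ) ≠ (g a : ℕ) := by
          by_contra hc
          push_neg at hc
          exact hfg (funext fun a => Fin.ext (hc a))
        obtain ⟨a, ha⟩ := this
        rcases lt_or_gt_of_ne ha with hlt | hgt
        · exact hdist f g ⟨a, hlt⟩ hxy
        · exact hdist g f ⟨a, hgt⟩ hxy.symm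
  calc N ^ k + 1 = Fintype.card (Option (α → Fin N)) := by
        simp [Fintype.card_option, Fintype.card_fun, hk]
    _ ≤ Fintype.card σ := Fintype.card_le_of_injective e hinj

end Aux3

/-- for `L = {a^N | a ∈ Σ}` over an alphabet of size `k ≥ 1` with
`N ≥ 1`, `L` is recognized by a DFA with `kN + 2` states, its upward closure is
`{w | ∃ a, |w|_a ≥ N}`, and `sc (↑L) = N ^ k + 1`. -/
theorem sc_upClosure_finite_lower_bound {α : Type} [Fintype α] [DecidableEq α]
    (k N : ℕ) (hk : Fintype.card α = k) (hk1 : 1 ≤ k) (hN : 1 ≤ N)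
    (L : Language α) (hL : L = {w : List α | ∃ a : α, w = List.replicate N a}) :
    (∃ (σ : Type) (_ : Fintype σ) (M : DFA α σ),
      Fintype.card σ = k * N + 2 ∧ M.accepts = L) ∧
    UpClosure L = {w : List α | ∃ a : α, N ≤ w.count a} ∧
    sc (UpClosure L) = N ^ k + 1 := by
  subst hL
  set S : Language α := {w : List α | ∃ a : α, N ≤ w.count a} with hS
  have hUp : UpClosure {w : List α | ∃ a : α, w = List.replicate N a} = S :=
    up_eq N _ rfl
  refine ⟨⟨Option (Option (α × Fin N)), inferInstance, M1 N, card1 N k hk, accepts1 N hN⟩,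
    hUp, ?_⟩
  rw [hUp]
  unfold sc
  have hmem : (N ^ k + 1) ∈ {n | RecognizedBy S n} := by
    refine ⟨Option (α → Fin N), inferInstance, M2 N hN, ?_, accepts2 N hN⟩
    simp [Fintype.card_option, Fintype.card_fun, hk]
  apply _root_.le_antisymm
  · exact Nat.sInf_le hmem
  · refine le_csInf ⟨N ^ k + 1, hmem⟩ ?_
    rintro n ⟨σ, inst, M, hcard, hMacc⟩
    letI := inst
    exact hcard ▸ lower N k hN hk hk1 σ M hMacc
end
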